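/- For every natural number n, the number of permutations of length n avoiding all three patterns 123, 132 and 213 equals Fib(n+1), the (n+1)-st Fibonacci number. -/

import Mathlib

/-- A permutation `π` of length `n` contains the pattern `p` (a length-`k`
sequence of distinct values, given by its values) if there is a strictly
increasing choice of `k` indices on which `π` is order isomorphic to `p`. -/
def PermContains {n k : ℕ} (π : Equiv.Perm (Fin n)) (p : Fin k → ℕ) : Prop :=
  ∃ f : Fin k → Fin n, StrictMono f ∧ ∀ a b : Fin k, p a < p b ↔ π (f a) < π (f b)

/-- `π` avoids the pattern `p`. -/
def PermAvoids {n k : ℕ} (π : Equiv.Perm (Fin n)) (p : Fin k → ℕ) : Prop :=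
  ¬ PermContains π p

def AvCond (n : ℕ) (π : Equiv.Perm (Fin n)) : Prop :=
  ∀ i j : Fin n, (i : ℕ) + 2 ≤ (j : ℕ) → (π j : ℕ) < (π i : ℕ)

def ext1 {m : ℕ} (σ : Equiv.Perm (Fin m)) : Equiv.Perm (Fin (m + 1)) where
  toFun := Fin.cases (Fin.last m) (fun i => (σ i).castSucc)
  invFun := Fin.lastCases 0 (fun i => (σ.symm i).succ)
  left_inv := by
    intro x
    induction x using Fin.cases with
    | zero => simp
    | succ i => simp
  right_inv := by
    intro y
    induction y using Fin.lastCases with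
    | last => simp
    | cast i => simp

@[simp] lemma ext1_zero {m : ℕ} (σ : Equiv.Perm (Fin m)) : ext1 σ 0 = Fin.last m := rfl

@[simp] lemma ext1_succ {m : ℕ} (σ : Equiv.Perm (Fin m)) (i : Fin m) :
    ext1 σ i.succ = (σ i).castSucc := by
  show (Fin.cases (Fin.last m) (fun i => (σ i).castSucc) : (j : Fin (m+1)) → Fin (m+1)) i.succ = _
  simp

def ext2 {m : ℕ} (σ : Equiv.Perm (Fin m)) : Equiv.Perm (Fin (m + 2)) :=
  (Equiv.swap 0 1).trans (ext1 (ext1 σ))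

@[simp] lemma ext2_zero {m : ℕ} (σ : Equiv.Perm (Fin m)) :
    ((ext2 σ) 0 : ℕ) = m := by
  show ((ext1 (ext1 σ)) (Equiv.swap 0 1 0) : ℕ) = m
  rw [Equiv.swap_apply_left]
  rw [show (1 : Fin (m+2)) = (0 : Fin (m+1)).succ from rfl, ext1_succ]
  simp

@[simp] lemma ext2_one {m : ℕ} (σ : Equiv.Perm (Fin m)) :
    ((ext2 σ) 1 : ℕ) = m + 1 := by
  show ((ext1 (ext1 σ)) (Equiv.swap 0 1 1) : ℕ) = m + 1
  rw [Equiv.swap_apply_right]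
  simp

@[simp] lemma ext2_succ_succ {m : ℕ} (σ : Equiv.Perm (Fin m)) (i : Fin m) :
    ((ext2 σ) i.succ.succ : ℕ) = σ i := by
  show ((ext1 (ext1 σ)) (Equiv.swap 0 1 i.succ.succ) : ℕ) = σ i
  rw [Equiv.swap_apply_of_ne_of_ne (Fin.succ_ne_zero _)
    (by
      intro h
      have : ((i.succ.succ : Fin (m+2)) : ℕ) = 1 := by rw [h]; rfl
      simp [Fin.val_succ] at this)]
  rw [ext1_succ]
  simp

lemma avCond_ext1 {m : ℕ} (σ : Equiv.Perm (Fin m)) :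
    AvCond (m + 1) (ext1 σ) ↔ AvCond m σ := by
  constructor
  · intro h i j hij
    have := h i.succ j.succ (by simp [Fin.val_succ]; omega)
    rw [ext1_succ, ext1_succ] at this
    simpa using this
  · intro h i j hij
    induction j using Fin.cases with
    | zero => simp at hij
    | succ j =>
      induction i using Fin.cases with
      | zero =>
        rw [ext1_zero, ext1_succ]
        simpa using (σ j).isLt
      | succ i =>
        rw [ext1_succ, ext1_succ]
        simp only [Fin.coe_castSucc]
        exact h i j (by simp [Fin.val_succ] at hij; omega)

lemma avCond_ext2 {m : ℕ} (σ : Equiv.Perm (Fin m)) :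
    AvCond (m + 2) (ext2 σ) ↔ AvCond m σ := by
  constructor
  · intro h i j hij
    have := h i.succ.succ j.succ.succ (by simp [Fin.val_succ]; omega)
    rwa [ext2_succ_succ, ext2_succ_succ] at this
  · intro h i j hij
    induction j using Fin.cases with
    | zero => simp at hij
    | succ j =>
      induction j using Fin.cases with
      | zero => rw [Fin.succ_zero_eq_one] at hij ⊢; simp at hij
      | succ j =>
        induction i using Fin.cases with
        | zero =>
          rw [ext2_zero, ext2_succ_succ]
          exact (σ j).isLt
        | succ i =>
          induction i using Fin.cases with
          | zero =>
            rw [Fin.succ_zero_eq_one, ext2_one, ext2_succ_succ]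
            have := (σ j).isLt; omega
          | succ i =>
            rw [ext2_succ_succ, ext2_succ_succ]
            exact h i j (by simp [Fin.val_succ] at hij; omega)

lemma avCond_zero_ge {n : ℕ} (π : Equiv.Perm (Fin (n + 2))) (h : AvCond (n + 2) π) :
    n ≤ (π 0 : ℕ) := by
  have key : ∀ i : Fin n, (π i.succ.succ : ℕ) < (π 0 : ℕ) := by
    intro i
    exact h 0 i.succ.succ (by simp [Fin.val_succ])
  have hinj : Function.Injective (fun i : Fin n => (⟨(π i.succ.succ : ℕ), key i⟩ : Fin (π 0 : ℕ))) := by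
    intro a b hab
    simp only [Fin.mk.injEq] at hab
    have := π.injective (Fin.ext hab)
    exact Fin.succ_injective _ (Fin.succ_injective _ this)
  simpa using Fintype.card_le_of_injective _ hinj

lemma eq_ext1_of_avCond {n : ℕ} (π : Equiv.Perm (Fin (n + 2))) (h : AvCond (n + 2) π)
    (h0 : (π 0 : ℕ) = n + 1) : ∃ σ : Equiv.Perm (Fin (n + 1)), π = ext1 σ := by
  have hv : ∀ i : Fin (n + 1), (π i.succ : ℕ) < n + 1 := by
    intro i
    have hne : π i.succ ≠ π 0 := fun hne => by
      have := π.injective hne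
      exact Fin.succ_ne_zero i this
    have : (π i.succ : ℕ) ≠ n + 1 := fun hval => hne (Fin.ext (by rw [hval, h0]))
    have := (π i.succ).isLt
    omega
  set f : Fin (n + 1) → Fin (n + 1) := fun i => ⟨(π i.succ : ℕ), hv i⟩ with hf
  have hinj : Function.Injective f := by
    intro a b hab
    simp only [hf, Fin.mk.injEq] at hab
    exact Fin.succ_injective _ (π.injective (Fin.ext hab))
  refine ⟨Equiv.ofBijective f (Finite.injective_iff_bijective.mp hinj), ?_⟩
  apply Equiv.ext
  intro x
  induction x using Fin.cases with
  | zero => rw [ext1_zero]; exact Fin.ext (by simpa using h0)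
  | succ i =>
    rw [ext1_succ]
    exact Fin.ext (by simp [Equiv.ofBijective_apply, hf])

lemma eq_ext2_of_avCond {n : ℕ} (π : Equiv.Perm (Fin (n + 2))) (h : AvCond (n + 2) π)
    (h0 : (π 0 : ℕ) = n) : ∃ σ : Equiv.Perm (Fin n), π = ext2 σ := by
  have h1 : (π 1 : ℕ) = n + 1 := by
    set x := π.symm (Fin.last (n + 1)) with hx
    have hpx : π x = Fin.last (n + 1) := π.apply_symm_apply _
    have hx0 : x ≠ 0 := fun hc => by
      rw [hc] at hpx
      have : (π 0 : ℕ) = n + 1 := by rw [hpx]; rfl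
      omega
    have hxlt : (x : ℕ) < 2 := by
      by_contra hc
      push_neg at hc
      have := h 0 x (by simp only [Fin.val_zero]; omega)
      rw [hpx] at this
      simp [Fin.val_last] at this
      omega
    have : x = 1 := by
      apply Fin.ext
      have : (x : ℕ) ≠ 0 := fun hc => hx0 (Fin.ext hc)
      simp only [Fin.val_one]
      omega
    rw [← this, hpx]
    rfl
  have hv : ∀ i : Fin n, (π i.succ.succ : ℕ) < n := by
    intro i
    have := h 0 i.succ.succ (by simp [Fin.val_succ])
    omega
  set f : Fin n → Fin n := fun i => ⟨(π i.succ.succ : ℕ), hv i⟩ with hf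
  have hinj : Function.Injective f := by
    intro a b hab
    simp only [hf, Fin.mk.injEq] at hab
    have := π.injective (Fin.ext hab)
    exact Fin.succ_injective _ (Fin.succ_injective _ this)
  refine ⟨Equiv.ofBijective f (Finite.injective_iff_bijective.mp hinj), ?_⟩
  apply Equiv.ext
  intro x
  induction x using Fin.cases with
  | zero => exact Fin.ext (by rw [h0, ext2_zero])
  | succ i =>
    induction i using Fin.cases with
    | zero =>
      rw [Fin.succ_zero_eq_one]
      exact Fin.ext (by rw [h1, ext2_one])
    | succ i =>
      exact Fin.ext (by simp [Equiv.ofBijective_apply, hf])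

lemma card_avCond_step (n : ℕ) :
    Nat.card {π : Equiv.Perm (Fin (n + 2)) // AvCond (n + 2) π} =
      Nat.card {π : Equiv.Perm (Fin (n + 1)) // AvCond (n + 1) π} +
        Nat.card {π : Equiv.Perm (Fin n) // AvCond n π} := by
  set F : {σ : Equiv.Perm (Fin (n + 1)) // AvCond (n + 1) σ} ⊕
      {σ : Equiv.Perm (Fin n) // AvCond n σ} →
      {π : Equiv.Perm (Fin (n + 2)) // AvCond (n + 2) π} :=
    Sum.elim (fun s => ⟨ext1 s.1, (avCond_ext1 s.1).mpr s.2⟩)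
      (fun s => ⟨ext2 s.1, (avCond_ext2 s.1).mpr s.2⟩) with hF
  have hbij : Function.Bijective F := by
    constructor
    · rintro (⟨σ, hσ⟩ | ⟨σ, hσ⟩) (⟨τ, hτ⟩ | ⟨τ, hτ⟩) hxy <;>
        simp only [hF, Sum.elim_inl, Sum.elim_inr, Subtype.mk.injEq] at hxy
      · congr 1
        ext1
        apply Equiv.ext
        intro i
        have := congrArg (fun (e : Equiv.Perm (Fin (n+2))) => e i.succ) hxy
        simp only [ext1_succ] at this
        exact Fin.castSucc_injective _ this
      · exfalso
        have := congrArg (fun (e : Equiv.Perm (Fin (n+2))) => (e 0 : ℕ)) hxy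
        simp only [ext1_zero, ext2_zero, Fin.val_last] at this
        omega
      · exfalso
        have := congrArg (fun (e : Equiv.Perm (Fin (n+2))) => (e 0 : ℕ)) hxy
        simp only [ext1_zero, ext2_zero, Fin.val_last] at this
        omega
      · congr 1
        ext1
        apply Equiv.ext
        intro i
        have := congrArg (fun (e : Equiv.Perm (Fin (n+2))) => (e i.succ.succ : ℕ)) hxy
        simp only [ext2_succ_succ] at this
        exact Fin.ext this
    · rintro ⟨π, hπ⟩
      have hge := avCond_zero_ge π hπ
      have hlt := (π 0).isLt
      rcases eq_or_lt_of_le hge with heq | hlt2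
      · obtain ⟨σ, rfl⟩ := eq_ext2_of_avCond π hπ heq.symm
        exact ⟨Sum.inr ⟨σ, (avCond_ext2 σ).mp hπ⟩, rfl⟩
      · have : (π 0 : ℕ) = n + 1 := by omega
        obtain ⟨σ, rfl⟩ := eq_ext1_of_avCond π hπ this
        exact ⟨Sum.inl ⟨σ, (avCond_ext1 σ).mp hπ⟩, rfl⟩
  rw [← Nat.card_eq_of_bijective F hbij, Nat.card_sum]

lemma card_avCond : ∀ n : ℕ, Nat.card {π : Equiv.Perm (Fin n) // AvCond n π} = Nat.fib (n + 1) := by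
  intro n
  induction n using Nat.strong_induction_on with
  | _ n ih =>
    match n with
    | 0 =>
      have hall : ∀ π : Equiv.Perm (Fin 0), AvCond 0 π := fun π i => i.elim0
      rw [Nat.card_congr (Equiv.subtypeUnivEquiv hall), Nat.card_eq_fintype_card,
        Fintype.card_perm]
      simp
    | 1 =>
      have hall : ∀ π : Equiv.Perm (Fin 1), AvCond 1 π := fun π i j hij => by
        have := j.isLt; omega
      rw [Nat.card_congr (Equiv.subtypeUnivEquiv hall), Nat.card_eq_fintype_card,
        Fintype.card_perm]
      simp
    | (k + 2) =>
      rw [card_avCond_step k, ih (k + 1) (by omega), ih k (by omega)]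
      conv_rhs => rw [show k + 2 + 1 = (k + 1) + 2 from rfl, Nat.fib_add_two]
      omega

lemma fin3_cases {P : Fin 3 → Prop} (h0 : P 0) (h1 : P 1) (h2 : P 2) : ∀ a, P a := by
  intro a
  induction a using Fin.cases with
  | zero => exact h0
  | succ k => induction k using Fin.cases with
    | zero => exact h1
    | succ k => induction k using Fin.cases with
      | zero => exact h2
      | succ k => exact k.elim0

lemma strictMono3 {n : ℕ} {i m j : Fin n} (h1 : (i:ℕ) < m) (h2 : (m:ℕ) < j) :
    StrictMono ![i, m, j] := by
  rw [Fin.strictMono_iff_lt_succ]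
  intro k
  induction k using Fin.cases with
  | zero =>
    simp only [Fin.castSucc_zero, Matrix.cons_val_zero, Fin.succ_zero_eq_one,
      Matrix.cons_val_one, Matrix.head_cons, Fin.lt_iff_val_lt_val]
    omega
  | succ k =>
    induction k using Fin.cases with
    | zero =>
      simp only [Fin.succ_zero_eq_one, Fin.castSucc_one, Matrix.cons_val_one, Matrix.head_cons,
        Fin.succ_one_eq_two, Matrix.cons_val_two, Matrix.tail_cons, Fin.lt_iff_val_lt_val,
        Matrix.cons_val_zero]
      omega
    | succ k => exact k.elim0

lemma avoids_iff_cond {n : ℕ} (π : Equiv.Perm (Fin n)) :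
    (PermAvoids π ![1, 2, 3] ∧ PermAvoids π ![1, 3, 2] ∧ PermAvoids π ![2, 1, 3]) ↔
      AvCond n π := by
  constructor
  · rintro ⟨h1, h2, h3⟩ i j hij
    by_contra hc
    push_neg at hc
    have hne : (π i : ℕ) ≠ (π j : ℕ) := fun h => by
      have := π.injective (Fin.ext h)
      subst this
      omega
    have hplt : (π i : ℕ) < π j := by omega
    have hmlt : (i : ℕ) + 1 < n := by
      have := j.isLt; omega
    set m : Fin n := ⟨(i : ℕ) + 1, hmlt⟩ with hmdef
    have hmval : (m : ℕ) = (i : ℕ) + 1 := rfl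
    have him : (i : ℕ) < m := by omega
    have hmj : (m : ℕ) < j := by omega
    have hmi' : (π m : ℕ) ≠ (π i : ℕ) := fun h => by
      have := π.injective (Fin.ext h)
      rw [this] at hmval; omega
    have hmj' : (π m : ℕ) ≠ (π j : ℕ) := fun h => by
      have := π.injective (Fin.ext h)
      rw [this] at hmval; omega
    have hsm : StrictMono ![i, m, j] := strictMono3 him hmj
    rcases lt_trichotomy ((π m : ℕ)) ((π i : ℕ)) with hcase | hcase | hcase
    · refine h3 ⟨![i, m, j], hsm, ?_⟩
      refine fin3_cases ?_ ?_ ?_ <;> refine fin3_cases ?_ ?_ ?_ <;>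
        · simp only [Matrix.cons_val_zero, Matrix.cons_val_one, Matrix.head_cons,
            Matrix.cons_val_two, Matrix.tail_cons, Fin.lt_iff_val_lt_val]
          omega
    · exact absurd hcase hmi'
    · rcases lt_trichotomy ((π m : ℕ)) ((π j : ℕ)) with hcase2 | hcase2 | hcase2
      · refine h1 ⟨![i, m, j], hsm, ?_⟩
        refine fin3_cases ?_ ?_ ?_ <;> refine fin3_cases ?_ ?_ ?_ <;>
          · simp only [Matrix.cons_val_zero, Matrix.cons_val_one, Matrix.head_cons,
              Matrix.cons_val_two, Matrix.tail_cons, Fin.lt_iff_val_lt_val]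
            omega
      · exact absurd hcase2 hmj'
      · refine h2 ⟨![i, m, j], hsm, ?_⟩
        refine fin3_cases ?_ ?_ ?_ <;> refine fin3_cases ?_ ?_ ?_ <;>
          · simp only [Matrix.cons_val_zero, Matrix.cons_val_one, Matrix.head_cons,
              Matrix.cons_val_two, Matrix.tail_cons, Fin.lt_iff_val_lt_val]
            omega
  · intro hc
    have key : ∀ (p : Fin 3 → ℕ), p 0 < p 2 → PermAvoids π p := by
      rintro p hp ⟨f, hsm, hiso⟩
      have h01 : f 0 < f 1 := hsm (by decide)
      have h12 : f 1 < f 2 := hsm (by decide)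
      rw [Fin.lt_iff_val_lt_val] at h01 h12
      have h02 : ((f 0 : ℕ)) + 2 ≤ (f 2 : ℕ) := by omega
      have hlt := hc (f 0) (f 2) h02
      have := (hiso 0 2).mp hp
      rw [Fin.lt_iff_val_lt_val] at this
      omega
    exact ⟨key _ (by decide), key _ (by decide), key _ (by decide)⟩

theorem av123_132_213_card (n : ℕ) :
    Nat.card {π : Equiv.Perm (Fin n) //
        PermAvoids π ![1, 2, 3] ∧ PermAvoids π ![1, 3, 2] ∧ PermAvoids π ![2, 1, 3]} =
      Nat.fib (n + 1) := by
  rw [Nat.card_congr (Equiv.subtypeEquivRight (fun π => avoids_iff_cond π))]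
  exact card_avCond n
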